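/- Let ℍ denote the real quaternions, f ∈ ℍ[x] nonzero, and t, n ∈ ℝ with t² − 4n < 0. Suppose the polynomial x² − tx + n (with real, hence central, coefficients) divides the companion polynomial C_f = f̄·f in ℍ[x], i.e., f̄·f = h·(x² − tx + n) for some h ∈ ℍ[x]. Then f has a root λ ∈ ℍ with Tr(λ) = t and Norm(λ) = n, i.e., λ + λ̄ = t, λ̄λ = n, and the left evaluation f(λ) = 0. -/

import Mathlib

open Polynomial

/-- The conjugate polynomial: apply quaternion conjugation (`star`)
coefficient-wise. -/
noncomputable def polyConj (f : (Quaternion ℝ)[X]) : (Quaternion ℝ)[X] :=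
  f.sum fun i a => C (star a) * X ^ i

lemma coeff_polyConj (f : (Quaternion ℝ)[X]) (k : ℕ) :
    (polyConj f).coeff k = star (f.coeff k) := by
  rw [polyConj, Polynomial.sum, finset_sum_coeff]
  simp only [coeff_C_mul, coeff_X_pow, mul_ite, mul_one, mul_zero]
  rw [Finset.sum_ite_eq f.support k fun i => star (f.coeff i)]
  by_cases hk : k ∈ f.support
  · simp [hk]
  · simp [hk, Polynomial.notMem_support_iff.mp hk]

lemma expand_aux {R : Type*} [Ring R] (Pg Pr g r q : R[X])
    (hg : q * g = g * q) (hr : q * r = r * q) :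
    (Pg * q + Pr) * (q * g + r) =
      (Pg * g * q + Pg * r + Pr * g) * q + Pr * r := by
  calc (Pg * q + Pr) * (q * g + r)
      = Pg * (q * (q * g)) + Pg * (q * r) + (Pr * (q * g) + Pr * r) := by noncomm_ring
    _ = Pg * (q * (g * q)) + Pg * (r * q) + (Pr * (g * q) + Pr * r) := by rw [hg, hr]
    _ = Pg * ((q * g) * q) + Pg * (r * q) + (Pr * (g * q) + Pr * r) := by noncomm_ring
    _ = Pg * ((g * q) * q) + Pg * (r * q) + (Pr * (g * q) + Pr * r) := by rw [hg]
    _ = (Pg * g * q + Pg * r + Pr * g) * q + Pr * r := by noncomm_ring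


lemma quat_smul_coe (x y : ℝ) :
    x • ((y : ℝ) : Quaternion ℝ) = ((x * y : ℝ) : Quaternion ℝ) :=
  Quaternion.smul_coe x y

lemma quat_star_smul (r : ℝ) (x : Quaternion ℝ) : star (r • x) = r • star x := by
  rw [← Quaternion.coe_mul_eq_smul, star_mul, Quaternion.star_coe,
    ← Quaternion.coe_commutes, Quaternion.coe_mul_eq_smul]

lemma quat_inv_eq (a : Quaternion ℝ) (ha : a ≠ 0) :
    a⁻¹ = ((Quaternion.normSq a)⁻¹ : ℝ) • star a := by
  refine inv_eq_of_mul_eq_one_right ?_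
  rw [mul_smul_comm, Quaternion.self_mul_star, quat_smul_coe,
    inv_mul_cancel₀ (Quaternion.normSq_ne_zero.2 ha), Quaternion.coe_one]

lemma quat_root (a b : Quaternion ℝ) (ha : a ≠ 0) (t n : ℝ)
    (e1 : star a * b + star b * a = (star a * a) * (-(t : Quaternion ℝ)))
    (e0 : star b * b = (star a * a) * ((n : Quaternion ℝ))) :
    -(a⁻¹ * b) + star (-(a⁻¹ * b)) = (t : Quaternion ℝ) ∧
      star (-(a⁻¹ * b)) * -(a⁻¹ * b) = (n : Quaternion ℝ) := by
  set N : ℝ := Quaternion.normSq a with hN_def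
  have hNne : N ≠ 0 := Quaternion.normSq_ne_zero.2 ha
  have hsma : star a * a = ((N : ℝ) : Quaternion ℝ) := Quaternion.star_mul_self a
  have hmsa : a * star a = ((N : ℝ) : Quaternion ℝ) := Quaternion.self_mul_star a
  have hlam : -(a⁻¹ * b) = -((N⁻¹ : ℝ) • (star a * b)) := by
    rw [quat_inv_eq a ha, smul_mul_assoc]
  have hslam : star (-(a⁻¹ * b)) = -((N⁻¹ : ℝ) • (star b * a)) := by
    rw [hlam, star_neg, quat_star_smul, star_mul, star_star]
  constructor
  · rw [hslam, hlam, ← neg_add, ← smul_add, e1, hsma, mul_neg, ← Quaternion.coe_mul,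
      smul_neg, neg_neg, quat_smul_coe]
    rw [show N⁻¹ * (N * t) = t by field_simp]
  · rw [hslam, hlam, neg_mul_neg, smul_mul_assoc, mul_smul_comm, smul_smul]
    have assoc1 : star b * a * (star a * b) = star b * (a * star a) * b := by
      noncomm_ring
    rw [assoc1, hmsa, mul_assoc, Quaternion.coe_commutes, ← mul_assoc, e0, hsma,
      ← Quaternion.coe_mul, ← Quaternion.coe_mul, quat_smul_coe]
    rw [show N⁻¹ * N⁻¹ * (N * n * N) = n by field_simp]

set_option maxHeartbeats 1000000 in
/-- if `x² - t·x + n` (with `t, n` real, `t² - 4n < 0`) divides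
the companion polynomial `C_f = f̄·f` of a nonzero quaternion polynomial `f`,
then `f` has a root `λ` with trace `t` and norm `n`. -/
theorem root_of_companion_quadratic_factor
    (f : (Quaternion ℝ)[X]) (hf : f ≠ 0) (t n : ℝ) (hdisc : t ^ 2 - 4 * n < 0)
    (h : (Quaternion ℝ)[X])
    (hdiv : polyConj f * f =
      h * (X ^ 2 - C ((t : Quaternion ℝ)) * X + C ((n : Quaternion ℝ)))) :
    ∃ lam : Quaternion ℝ,
      lam + star lam = (t : Quaternion ℝ) ∧
      star lam * lam = (n : Quaternion ℝ) ∧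
      f.eval lam = 0 := by
  classical
  set q : (Quaternion ℝ)[X] :=
      X ^ 2 - C ((t : Quaternion ℝ)) * X + C ((n : Quaternion ℝ)) with hq_def
  -- coefficients of q are real scalars
  have hq_coeff : ∀ k, ∃ u : ℝ, q.coeff k = (u : Quaternion ℝ) := by
    intro k
    refine ⟨(if k = 2 then (1:ℝ) else 0) - t * (if k = 1 then 1 else 0)
      + (if k = 0 then n else 0), ?_⟩
    simp only [hq_def, coeff_add, coeff_sub, coeff_C_mul, coeff_X_pow, coeff_C, coeff_X]
    split_ifs <;> first | (exfalso; omega) | simp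
  have hq_star : ∀ k, star (q.coeff k) = q.coeff k := by
    intro k; obtain ⟨u, hu⟩ := hq_coeff k; rw [hu, Quaternion.star_coe]
  have hq_comm : ∀ z : Quaternion ℝ, ∀ k, q.coeff k * z = z * q.coeff k := by
    intro z k; obtain ⟨u, hu⟩ := hq_coeff k; rw [hu, Quaternion.coe_commutes]
  have hq_central : ∀ p : (Quaternion ℝ)[X], q * p = p * q := by
    intro p
    refine Polynomial.ext fun k => ?_
    rw [coeff_mul, coeff_mul]
    calc ∑ x ∈ Finset.HasAntidiagonal.antidiagonal k, q.coeff x.1 * p.coeff x.2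
        = ∑ x ∈ Finset.HasAntidiagonal.antidiagonal k,
            (fun y : ℕ × ℕ => p.coeff y.1 * q.coeff y.2) x.swap :=
          Finset.sum_congr rfl fun x _ => by
            simp only [Prod.fst_swap, Prod.snd_swap]
            exact hq_comm (p.coeff x.2) x.1
      _ = ∑ x ∈ Finset.HasAntidiagonal.antidiagonal k, p.coeff x.1 * q.coeff x.2 :=
          Finset.Nat.sum_antidiagonal_swap
            (f := fun y : ℕ × ℕ => p.coeff y.1 * q.coeff y.2)
  have hq_monic : q.Monic := by
    have h2 : q = X ^ 2 + (C ((n : Quaternion ℝ)) - C ((t : Quaternion ℝ)) * X) := by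
      rw [hq_def]; noncomm_ring
    rw [h2]
    refine monic_X_pow_add ?_
    refine lt_of_le_of_lt (degree_sub_le _ _) ?_
    rw [max_lt_iff]
    constructor
    · exact lt_of_le_of_lt degree_C_le (by norm_num)
    · refine lt_of_le_of_lt (degree_mul_le _ _) ?_
      refine lt_of_le_of_lt (add_le_add degree_C_le degree_X_le) ?_
      norm_num
  have hdq : q.degree = 2 := by
    have h2 : q = X ^ 2 + (C ((n : Quaternion ℝ)) - C ((t : Quaternion ℝ)) * X) := by
      rw [hq_def]; noncomm_ring
    rw [h2]
    rw [degree_add_eq_left_of_degree_lt, degree_X_pow]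
    · rfl
    rw [degree_X_pow]
    refine lt_of_le_of_lt (degree_sub_le _ _) ?_
    rw [max_lt_iff]
    constructor
    · exact lt_of_le_of_lt degree_C_le (by norm_num)
    · refine lt_of_le_of_lt (degree_mul_le _ _) ?_
      refine lt_of_le_of_lt (add_le_add degree_C_le degree_X_le) ?_
      norm_num
  -- conjugation interacts with multiplication by q
  have hconj : ∀ g r : (Quaternion ℝ)[X],
      polyConj (q * g + r) = polyConj g * q + polyConj r := by
    intro g r
    refine Polynomial.ext fun k => ?_
    rw [coeff_polyConj, coeff_add, coeff_add, coeff_polyConj, coeff_mul, coeff_mul,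
      star_add]
    congr 1
    rw [star_sum]
    calc ∑ x ∈ Finset.HasAntidiagonal.antidiagonal k, star (q.coeff x.1 * g.coeff x.2)
        = ∑ x ∈ Finset.HasAntidiagonal.antidiagonal k,
            (fun y : ℕ × ℕ => (polyConj g).coeff y.1 * q.coeff y.2) x.swap :=
          Finset.sum_congr rfl fun x _ => by
            simp only [Prod.fst_swap, Prod.snd_swap, coeff_polyConj]
            rw [star_mul, hq_star]
      _ = ∑ x ∈ Finset.HasAntidiagonal.antidiagonal k, (polyConj g).coeff x.1 * q.coeff x.2 :=
          Finset.Nat.sum_antidiagonal_swap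
            (f := fun y : ℕ × ℕ => (polyConj g).coeff y.1 * q.coeff y.2)
  -- division with remainder
  set g : (Quaternion ℝ)[X] := f /ₘ q with hg_def
  set r : (Quaternion ℝ)[X] := f %ₘ q with hr_def
  have hfd : f = q * g + r := by
    have := modByMonic_add_div f q
    rw [← this]; rw [add_comm]
  have hr_lt : r.degree < 2 := by
    rw [← hdq]; exact degree_modByMonic_lt f hq_monic
  have hr_le : r.degree ≤ 1 := by
    rcases hd : r.degree with _ | m
    · exact bot_le
    · rw [hd] at hr_lt
      have hm : (↑m : WithBot ℕ) < ↑(2:ℕ) := hr_lt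
      have h1 : m ≤ 1 := Nat.lt_succ_iff.mp (WithBot.coe_lt_coe.mp hm)
      exact (WithBot.coe_le_coe.mpr h1 : (↑m : WithBot ℕ) ≤ ↑(1:ℕ))
  clear_value q g r
  set a : Quaternion ℝ := r.coeff 1 with ha_def
  set b : Quaternion ℝ := r.coeff 0 with hb_def
  have hr_eq : r = C a * X + C b := eq_X_add_C_of_degree_le_one hr_le
  clear_value a b
  -- companion identity gives: polyConj r * r = c * q
  obtain ⟨c, hc⟩ : ∃ c : (Quaternion ℝ)[X], polyConj r * r = c * q := by
    refine ⟨h - (polyConj g * g * q + polyConj g * r + polyConj r * g), ?_⟩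
    have e1 : polyConj f = polyConj g * q + polyConj r := by
      conv_lhs => rw [hfd]
      exact hconj g r
    have e2 : polyConj f * f =
        (polyConj g * g * q + polyConj g * r + polyConj r * g) * q + polyConj r * r := by
      nth_rewrite 2 [hfd]
      rw [e1]
      exact expand_aux _ _ _ _ _ (hq_central g) (hq_central r)
    rw [sub_mul, ← hdiv, e2, add_sub_cancel_left]
  -- q coefficients
  have hq2 : q.coeff 2 = 1 := by
    simp [hq_def, coeff_X_pow, coeff_C]
  have hq1 : q.coeff 1 = -((t : Quaternion ℝ)) := by
    simp [hq_def, coeff_X_pow, coeff_C]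
  have hq0 : q.coeff 0 = ((n : Quaternion ℝ)) := by
    simp [hq_def, coeff_X_pow, coeff_C]
  have hr2 : r.coeff 2 = 0 := coeff_eq_zero_of_degree_lt hr_lt
  -- evaluation helpers
  have heval_q : ∀ lam : Quaternion ℝ, lam + star lam = (t : Quaternion ℝ) →
      star lam * lam = (n : Quaternion ℝ) → q.eval lam = 0 := by
    intro lam h1 h2
    rw [hq_def]
    simp only [X_pow_eq_monomial, eval_add, eval_sub, eval_X, eval_C, eval_C_mul,
      eval_monomial, one_mul]
    rw [← h1, ← h2]
    noncomm_ring
  have heval_mul : ∀ (p : (Quaternion ℝ)[X]) (lam : Quaternion ℝ),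
      q.eval lam = 0 → (p * q).eval lam = 0 := by
    intro p lam hql
    have hcom : ∀ k, Commute ((RingHom.id (Quaternion ℝ)) (q.coeff k)) lam := by
      intro k
      obtain ⟨u, hu⟩ := hq_coeff k
      simpa [hu] using Quaternion.coe_commute u lam
    have hmn := Polynomial.eval₂_mul_noncomm (RingHom.id (Quaternion ℝ)) lam
      (p := p) (q := q) hcom
    have : (p * q).eval lam = p.eval lam * q.eval lam := hmn
    rw [this, hql, mul_zero]
  -- the key coefficient facts, by cases on a
  by_cases ha : a = 0
  · by_cases hb : b = 0
    · -- r = 0, f = q * g; pick the standard quaternion with trace t, norm n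
      have hr0 : r = 0 := by rw [hr_eq, ha, hb]; simp
      have hpos : 0 < n - (t / 2) ^ 2 := by nlinarith
      set s : ℝ := Real.sqrt (n - (t / 2) ^ 2) with hs_def
      have hs2 : s ^ 2 = n - (t / 2) ^ 2 := Real.sq_sqrt hpos.le
      refine ⟨(Quaternion.equivTuple ℝ).symm ![t / 2, s, 0, 0], ?_, ?_, ?_⟩
      · ext <;> simp [-Quaternion.equivTuple_symm_apply, Quaternion.re_add, Quaternion.re_star, Quaternion.imI_add, Quaternion.imI_star, Quaternion.imJ_add, Quaternion.imJ_star, Quaternion.imK_add, Quaternion.imK_star] <;> simp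
      · rw [Quaternion.star_mul_self]
        congr 1
        rw [Quaternion.normSq_def']
        simp
        nlinarith [hs2]
      · rw [hfd, hr0, add_zero, hq_central g]
        refine heval_mul g _ (heval_q _ ?_ ?_)
        · ext <;> simp [-Quaternion.equivTuple_symm_apply, Quaternion.re_add, Quaternion.re_star, Quaternion.imI_add, Quaternion.imI_star, Quaternion.imJ_add, Quaternion.imJ_star, Quaternion.imK_add, Quaternion.imK_star] <;> simp
        · rw [Quaternion.star_mul_self]
          congr 1
          rw [Quaternion.normSq_def']
          simp
          nlinarith [hs2]
    · -- contradiction with degrees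
      exfalso
      have hrC : r = C b := by rw [hr_eq, ha]; simp
      have hPrC : polyConj r = C (star b) := by
        refine Polynomial.ext fun k => ?_
        rw [coeff_polyConj, hrC]
        rcases k with _ | k <;> simp [coeff_C]
      have hCC : C (star b * b) = c * q := by
        rw [C_mul, ← hPrC, ← hrC, hc]
      have hbb : star b * b ≠ 0 := by
        rw [Quaternion.star_mul_self]
        intro h0
        refine Quaternion.normSq_ne_zero.2 hb ?_
        have := congrArg QuaternionAlgebra.re h0
        simpa [Quaternion.re_zero] using this
      have hcne : c ≠ 0 := by
        intro h0
        rw [h0, zero_mul] at hCC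
        exact hbb (by simpa using hCC)
      have hdeg : (0 : WithBot ℕ) = c.degree + 2 := by
        rw [← degree_C hbb, hCC, hq_monic.degree_mul, hdq]
      have hcd : (0 : WithBot ℕ) ≤ c.degree := zero_le_degree_iff.2 hcne
      have h2le : (2 : WithBot ℕ) ≤ (0 : WithBot ℕ) := by
        calc (2 : WithBot ℕ) = 0 + 2 := by rfl
          _ ≤ c.degree + 2 := add_le_add_left hcd 2
          _ = 0 := hdeg.symm
      norm_num at h2le
  · -- the generic case
    have hPr_eq : polyConj r = C (star a) * X + C (star b) := by
      refine Polynomial.ext fun k => ?_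
      rw [coeff_polyConj]
      conv_lhs => rw [hr_eq]
      rcases k with _ | _ | k <;>
        simp [coeff_add, coeff_C_mul, coeff_X, coeff_C]
    -- c is a constant
    have hdeg_rr : (polyConj r * r).degree ≤ 2 := by
      refine le_trans (degree_mul_le _ _) ?_
      calc (polyConj r).degree + r.degree ≤ 1 + 1 := by
            refine add_le_add ?_ hr_le
            rw [hPr_eq]; exact degree_linear_le
        _ = 2 := by rfl
    have hcd2 : c.degree + 2 ≤ 2 := by
      have hx : (polyConj r * r).degree = c.degree + 2 := by
        rw [hc, hq_monic.degree_mul, hdq]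
      rw [← hx]; exact hdeg_rr
    have hc_deg : c.degree ≤ 0 := by
      have h2b : (2 : WithBot ℕ) ≠ ⊥ := by decide
      have := (WithBot.add_le_add_iff_right h2b).mp
        (by rw [zero_add]; exact hcd2 : c.degree + 2 ≤ 0 + 2)
      exact this
    have hc0 : c = C (c.coeff 0) := eq_C_of_degree_le_zero hc_deg
    have hck : ∀ k, (polyConj r * r).coeff k = c.coeff 0 * q.coeff k := by
      intro k
      rw [hc]
      nth_rewrite 1 [hc0]
      rw [coeff_C_mul]
    -- coefficient equations
    have hm2 : (polyConj r * r).coeff 2 = star a * a := by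
      rw [coeff_mul, Finset.Nat.sum_antidiagonal_eq_sum_range_succ_mk]
      simp [Finset.sum_range_succ, coeff_polyConj, hr2, ← ha_def, ← hb_def]
    have hm1 : (polyConj r * r).coeff 1 = star b * a + star a * b := by
      rw [coeff_mul, Finset.Nat.sum_antidiagonal_eq_sum_range_succ_mk]
      simp [Finset.sum_range_succ, coeff_polyConj, ← ha_def, ← hb_def]
    have hm0 : (polyConj r * r).coeff 0 = star b * b := by
      rw [coeff_mul, Finset.Nat.sum_antidiagonal_eq_sum_range_succ_mk]
      simp [Finset.sum_range_succ, coeff_polyConj, ← hb_def]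
    have eq2 : star a * a = c.coeff 0 := by
      have := hck 2; rw [hm2, hq2, mul_one] at this; exact this
    have eq1 : star a * b + star b * a = (star a * a) * (-(t : Quaternion ℝ)) := by
      have := hck 1; rw [hm1, hq1, ← eq2] at this
      rw [← this]; exact add_comm _ _
    have eq0 : star b * b = (star a * a) * ((n : Quaternion ℝ)) := by
      have := hck 0; rw [hm0, hq0, ← eq2] at this; exact this
    obtain ⟨htr, hnr⟩ := quat_root a b ha t n eq1 eq0
    refine ⟨-(a⁻¹ * b), htr, hnr, ?_⟩
    rw [hfd, eval_add, hq_central g]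
    rw [heval_mul g _ (heval_q _ htr hnr), zero_add]
    rw [hr_eq]
    simp only [eval_add, eval_C_mul, eval_X, eval_C]
    rw [mul_neg, ← mul_assoc, mul_inv_cancel₀ ha, one_mul, neg_add_cancel]
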